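/- Let F₁, F₂ : ℝ³ → ℝ be C¹ with F_i(0,0,H) = 0 for all H and F_i(0,0,0) = 0, ∂F_i/∂w(0,0,0) = ∂F_i/∂z(0,0,0) = 0. Let (w,z,H) solve w' = λz + F₁, z' = -λw + F₂, H' = F₃ with (w(t), z(t), H(t)) → (0,0,0). Write w = R cos θ, z = R sin θ with R > 0. Then θ'(t) → -λ as t → ∞. -/

import Mathlib

open Filter

/-- Key estimate: a C¹ function vanishing on the axis with vanishing
(w,z)-derivatives at the origin is o(max |a| |b|) near the origin. -/
lemma vanish_bound (G : ℝ × ℝ × ℝ → ℝ) (hG : ContDiff ℝ 1 G)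
    (hG0 : ∀ h : ℝ, G (0, 0, h) = 0)
    (hd1 : fderiv ℝ G (0, 0, 0) (1, 0, 0) = 0)
    (hd2 : fderiv ℝ G (0, 0, 0) (0, 1, 0) = 0)
    {ε : ℝ} (hε : 0 < ε) :
    ∃ δ > 0, ∀ a b h : ℝ, ‖((a, b, h) : ℝ × ℝ × ℝ)‖ < δ →
      |G (a, b, h)| ≤ ε * max |a| |b| := by
  set e : (ℝ × ℝ) →L[ℝ] (ℝ × ℝ × ℝ) :=
    (ContinuousLinearMap.fst ℝ ℝ ℝ).prod ((ContinuousLinearMap.snd ℝ ℝ ℝ).prod 0) with he_def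
  have he : ∀ x : ℝ × ℝ, e x = (x.1, x.2, 0) := fun x => rfl
  have hA0 : (fderiv ℝ G (0, 0, 0)).comp e = 0 := by
    apply ContinuousLinearMap.ext
    intro x
    have hx : ((x.1, x.2, (0:ℝ)) : ℝ × ℝ × ℝ)
        = x.1 • ((1:ℝ), (0:ℝ), (0:ℝ)) + x.2 • ((0:ℝ), (1:ℝ), (0:ℝ)) := by
      simp [Prod.ext_iff]
    show fderiv ℝ G (0, 0, 0) (x.1, x.2, 0) = 0
    rw [hx, map_add, map_smul, map_smul, hd1, hd2]
    simp
  have hcont : Continuous fun p : ℝ × ℝ × ℝ => (fderiv ℝ G p).comp e := by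
    exact (((ContinuousLinearMap.compL ℝ (ℝ × ℝ) (ℝ × ℝ × ℝ) ℝ).flip e).continuous).comp
      (hG.continuous_fderiv one_ne_zero)
  have htend : Tendsto (fun p : ℝ × ℝ × ℝ => ‖(fderiv ℝ G p).comp e‖)
      (nhds (0, 0, 0)) (nhds 0) := by
    have := (hcont.norm.tendsto (0, 0, 0))
    rwa [hA0, norm_zero] at this
  have hev : ∀ᶠ p : ℝ × ℝ × ℝ in nhds (0, 0, 0), ‖(fderiv ℝ G p).comp e‖ < ε :=
    htend.eventually (eventually_lt_nhds hε)
  rw [Metric.eventually_nhds_iff] at hev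
  obtain ⟨δ, hδ, hball⟩ := hev
  refine ⟨δ, hδ, fun a b h hn => ?_⟩
  set s : Set (ℝ × ℝ) := Metric.closedBall 0 (max |a| |b|) with hs_def
  have hnormabh : ‖((a, b, h) : ℝ × ℝ × ℝ)‖ = max (max |a| |b|) |h| := by
    simp [Prod.norm_def, Real.norm_eq_abs, max_assoc]
  have hmem : ∀ x : ℝ × ℝ, x ∈ s → ‖((x.1, x.2, h) : ℝ × ℝ × ℝ)‖ < δ := by
    intro x hx
    have hx' : ‖x‖ ≤ max |a| |b| := by
      rw [hs_def, Metric.mem_closedBall, dist_zero_right] at hx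
      exact hx
    have h1 : ‖((x.1, x.2, h) : ℝ × ℝ × ℝ)‖ = max (max |x.1| |x.2|) |h| := by
      simp [Prod.norm_def, Real.norm_eq_abs, max_assoc]
    have h2 : max |x.1| |x.2| = ‖x‖ := by simp [Prod.norm_def, Real.norm_eq_abs]
    calc ‖((x.1, x.2, h) : ℝ × ℝ × ℝ)‖ = max (max |x.1| |x.2|) |h| := h1
      _ ≤ max (max |a| |b|) |h| := by
          apply max_le_max _ le_rfl; rw [h2]; exact hx'
      _ = ‖((a, b, h) : ℝ × ℝ × ℝ)‖ := hnormabh.symm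
      _ < δ := hn
  have hdiff : ∀ x : ℝ × ℝ, HasFDerivAt (fun y : ℝ × ℝ => G (y.1, y.2, h))
      ((fderiv ℝ G (x.1, x.2, h)).comp e) x := by
    intro x
    have hι : HasFDerivAt (fun y : ℝ × ℝ => ((y.1, y.2, h) : ℝ × ℝ × ℝ)) e x := by
      have : (fun y : ℝ × ℝ => ((y.1, y.2, h) : ℝ × ℝ × ℝ))
          = fun y => e y + ((0 : ℝ), (0 : ℝ), h) := by
        funext y; simp [he]
      rw [this]
      exact (e.hasFDerivAt).add_const _
    exact ((hG.differentiable one_ne_zero (x.1, x.2, h)).hasFDerivAt).comp x hι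
  have hbound : ∀ x ∈ s, ‖(fderiv ℝ G (x.1, x.2, h)).comp e‖ ≤ ε := by
    intro x hx
    have := hball (y := (x.1, x.2, h)) (by
      simpa [dist_eq_norm] using hmem x hx)
    exact this.le
  have h0s : ((0 : ℝ), (0 : ℝ)) ∈ s := by
    simp [hs_def, le_max_iff, abs_nonneg]
  have habs : ((a, b) : ℝ × ℝ) ∈ s := by
    simp [hs_def, dist_eq_norm, Prod.norm_def, Real.norm_eq_abs]
  have := (convex_closedBall (0 : ℝ × ℝ) (max |a| |b|)).norm_image_sub_le_of_norm_hasFDerivWithin_le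
    (f := fun y : ℝ × ℝ => G (y.1, y.2, h))
    (f' := fun x => (fderiv ℝ G (x.1, x.2, h)).comp e)
    (fun x hx => (hdiff x).hasFDerivWithinAt) hbound h0s habs
  have hGb : G ((0:ℝ), (0:ℝ), h) = 0 := hG0 h
  calc |G (a, b, h)| = ‖G (a, b, h) - G ((0:ℝ), (0:ℝ), h)‖ := by
        rw [hGb, sub_zero, Real.norm_eq_abs]
    _ ≤ ε * ‖((a, b) : ℝ × ℝ) - 0‖ := this
    _ = ε * max |a| |b| := by
        rw [sub_zero]; simp [Prod.norm_def, Real.norm_eq_abs]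

theorem stmt_17 (lam : ℝ) (hlam : lam ≠ 0)
    (F₁ F₂ F₃ : ℝ → ℝ → ℝ → ℝ)
    (hF₁C : ContDiff ℝ 1 (fun p : ℝ × ℝ × ℝ => F₁ p.1 p.2.1 p.2.2))
    (hF₂C : ContDiff ℝ 1 (fun p : ℝ × ℝ × ℝ => F₂ p.1 p.2.1 p.2.2))
    (hF₁0 : ∀ h : ℝ, F₁ 0 0 h = 0) (hF₂0 : ∀ h : ℝ, F₂ 0 0 h = 0)
    (hdF₁ : fderiv ℝ (fun p : ℝ × ℝ × ℝ => F₁ p.1 p.2.1 p.2.2) (0, 0, 0) (1, 0, 0) = 0 ∧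
            fderiv ℝ (fun p : ℝ × ℝ × ℝ => F₁ p.1 p.2.1 p.2.2) (0, 0, 0) (0, 1, 0) = 0)
    (hdF₂ : fderiv ℝ (fun p : ℝ × ℝ × ℝ => F₂ p.1 p.2.1 p.2.2) (0, 0, 0) (1, 0, 0) = 0 ∧
            fderiv ℝ (fun p : ℝ × ℝ × ℝ => F₂ p.1 p.2.1 p.2.2) (0, 0, 0) (0, 1, 0) = 0)
    (w z H R θ : ℝ → ℝ)
    (hw : ∀ t, HasDerivAt w (lam * z t + F₁ (w t) (z t) (H t)) t)
    (hz : ∀ t, HasDerivAt z (-lam * w t + F₂ (w t) (z t) (H t)) t)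
    (hH : ∀ t, HasDerivAt H (F₃ (w t) (z t) (H t)) t)
    (hwlim : Filter.Tendsto w Filter.atTop (nhds 0))
    (hzlim : Filter.Tendsto z Filter.atTop (nhds 0))
    (hHlim : Filter.Tendsto H Filter.atTop (nhds 0))
    (hRpos : ∀ t, 0 < R t)
    (hpolar : ∀ t, w t = R t * Real.cos (θ t) ∧ z t = R t * Real.sin (θ t))
    (hθ : ∀ t, HasDerivAt θ
      (-lam + (F₂ (w t) (z t) (H t) * Real.cos (θ t)
              - F₁ (w t) (z t) (H t) * Real.sin (θ t)) / R t) t) :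
    Filter.Tendsto (deriv θ) Filter.atTop (nhds (-lam)) := by
  set Err : ℝ → ℝ := fun t =>
    (F₂ (w t) (z t) (H t) * Real.cos (θ t)
      - F₁ (w t) (z t) (H t) * Real.sin (θ t)) / R t with hErr_def
  have hder : deriv θ = fun t => -lam + Err t := funext fun t => (hθ t).deriv
  rw [hder]
  have hErr0 : Tendsto Err atTop (nhds 0) := by
    rw [Metric.tendsto_nhds]
    intro ε hε
    have hε4 : (0:ℝ) < ε / 4 := by linarith
    obtain ⟨δ₁, hδ₁, hb₁⟩ := vanish_bound (fun p : ℝ × ℝ × ℝ => F₁ p.1 p.2.1 p.2.2)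
      hF₁C (fun h => hF₁0 h) hdF₁.1 hdF₁.2 hε4
    obtain ⟨δ₂, hδ₂, hb₂⟩ := vanish_bound (fun p : ℝ × ℝ × ℝ => F₂ p.1 p.2.1 p.2.2)
      hF₂C (fun h => hF₂0 h) hdF₂.1 hdF₂.2 hε4
    set δ := min δ₁ δ₂ with hδ_def
    have hδ : 0 < δ := lt_min hδ₁ hδ₂
    have hew : ∀ᶠ t in atTop, |w t| < δ := by
      have := Metric.tendsto_nhds.mp hwlim δ hδ
      simpa [Real.dist_eq] using this
    have hez : ∀ᶠ t in atTop, |z t| < δ := by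
      have := Metric.tendsto_nhds.mp hzlim δ hδ
      simpa [Real.dist_eq] using this
    have heH : ∀ᶠ t in atTop, |H t| < δ := by
      have := Metric.tendsto_nhds.mp hHlim δ hδ
      simpa [Real.dist_eq] using this
    filter_upwards [hew, hez, heH] with t hwt hzt hHt
    have hRt := hRpos t
    have hwR : |w t| ≤ R t := by
      rw [(hpolar t).1, abs_mul, abs_of_pos hRt]
      calc R t * |Real.cos (θ t)| ≤ R t * 1 :=
        mul_le_mul_of_nonneg_left (Real.abs_cos_le_one _) hRt.le
        _ = R t := mul_one _
    have hzR : |z t| ≤ R t := by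
      rw [(hpolar t).2, abs_mul, abs_of_pos hRt]
      calc R t * |Real.sin (θ t)| ≤ R t * 1 :=
        mul_le_mul_of_nonneg_left (Real.abs_sin_le_one _) hRt.le
        _ = R t := mul_one _
    have hmaxR : max |w t| |z t| ≤ R t := max_le hwR hzR
    have hnorm : ‖((w t, z t, H t) : ℝ × ℝ × ℝ)‖ < δ := by
      have : ‖((w t, z t, H t) : ℝ × ℝ × ℝ)‖ = max |w t| (max |z t| |H t|) := by
        simp [Prod.norm_def, Real.norm_eq_abs]
      rw [this]
      exact max_lt hwt (max_lt hzt hHt)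
    have h1 : |F₁ (w t) (z t) (H t)| ≤ ε / 4 * R t := by
      have := hb₁ (w t) (z t) (H t) (lt_of_lt_of_le hnorm (min_le_left _ _))
      calc |F₁ (w t) (z t) (H t)| ≤ ε / 4 * max |w t| |z t| := this
        _ ≤ ε / 4 * R t := mul_le_mul_of_nonneg_left hmaxR hε4.le
    have h2 : |F₂ (w t) (z t) (H t)| ≤ ε / 4 * R t := by
      have := hb₂ (w t) (z t) (H t) (lt_of_lt_of_le hnorm (min_le_right _ _))
      calc |F₂ (w t) (z t) (H t)| ≤ ε / 4 * max |w t| |z t| := this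
        _ ≤ ε / 4 * R t := mul_le_mul_of_nonneg_left hmaxR hε4.le
    have hnum : |F₂ (w t) (z t) (H t) * Real.cos (θ t)
        - F₁ (w t) (z t) (H t) * Real.sin (θ t)| ≤ ε / 2 * R t := by
      calc |F₂ (w t) (z t) (H t) * Real.cos (θ t) - F₁ (w t) (z t) (H t) * Real.sin (θ t)|
          ≤ |F₂ (w t) (z t) (H t) * Real.cos (θ t)| + |F₁ (w t) (z t) (H t) * Real.sin (θ t)| :=
            abs_sub _ _
        _ ≤ |F₂ (w t) (z t) (H t)| + |F₁ (w t) (z t) (H t)| := by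
            rw [abs_mul, abs_mul]
            exact add_le_add
              (mul_le_of_le_one_right (abs_nonneg _) (Real.abs_cos_le_one _))
              (mul_le_of_le_one_right (abs_nonneg _) (Real.abs_sin_le_one _))
        _ ≤ ε / 4 * R t + ε / 4 * R t := add_le_add h2 h1
        _ = ε / 2 * R t := by ring
    have : |Err t| ≤ ε / 2 := by
      rw [hErr_def]
      simp only []
      rw [abs_div, abs_of_pos hRt, div_le_iff₀ hRt]
      calc |F₂ (w t) (z t) (H t) * Real.cos (θ t) - F₁ (w t) (z t) (H t) * Real.sin (θ t)|
          ≤ ε / 2 * R t := hnum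
        _ = ε / 2 * R t := rfl
    rw [Real.dist_eq, sub_zero]
    linarith
  have := hErr0.const_add (-lam)
  simpa using this
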